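/- Consider the Game of Graph Nim on the graph H₁ (path A–B–C–D with edges AB, BC, CD, plus a disjoint edge EF). Let k ≥ 1 and let r be the unique natural number with 2^r ≤ k < 2^{r+1}. Suppose w(EF) = k, w(AB) = 2^{r+1}·m₁ + ℓ₁ and w(CD) = 2^{r+1}·m₂ + ℓ₂ with ℓ₁, ℓ₂ < 2^{r+1}, all of w(AB), w(BC), w(CD) positive, and m₁ ≠ m₂. Then the configuration is a winning position for the first player. -/

import Mathlib

namespace GraphNim

variable {V E : Type} [Fintype E]

/-- A legal move in the Game of Graph Nim: choose a vertex `v` and weakly decrease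
the weights of edges incident to `v` (all other edges unchanged), strictly
decreasing the total weight. -/
def Move (inc : V → E → Prop) (w w' : E → ℕ) : Prop :=
  ∃ v : V, (∀ e, w' e ≤ w e) ∧ (∀ e, ¬ inc v e → w' e = w e) ∧
    (∑ e, w' e) < (∑ e, w e)

/-- A configuration is losing for the player to move: every legal move leads to a
non-losing configuration (the all-zero configuration is vacuously losing). -/
def Losing (inc : V → E → Prop) (w : E → ℕ) : Prop :=
  ∀ w', Move inc w w' → ¬ Losing inc w'
termination_by ∑ e, w e
decreasing_by
  rename_i h
  obtain ⟨v, _, _, h3⟩ := h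
  exact h3

/-- A configuration is winning for the player to move: some legal move leads to a
losing configuration. -/
def Winning (inc : V → E → Prop) (w : E → ℕ) : Prop :=
  ∃ w', Move inc w w' ∧ Losing inc w'

end GraphNim

open GraphNim

/-- Endpoints of the edges of the graph `H₁` (path `A–B–C–D` plus a disjoint edge
`EF`): vertices `A = 0, …, F = 5`, edges `AB = 0, BC = 1, CD = 2, EF = 3`. -/
def h1Ends : Fin 4 → Fin 6 × Fin 6
  | 0 => (0, 1)
  | 1 => (1, 2)
  | 2 => (2, 3)
  | 3 => (4, 5)

def h1Inc (v : Fin 6) (e : Fin 4) : Prop := (h1Ends e).1 = v ∨ (h1Ends e).2 = v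

instance (v : Fin 6) (e : Fin 4) : Decidable (h1Inc v e) :=
  inferInstanceAs (Decidable (_ ∨ _))

private lemma xor_block {n m l k : ℕ} (hl : l < 2 ^ n) (hk : k < 2 ^ n) :
    (2 ^ n * m + l) ^^^ k = 2 ^ n * m + (l ^^^ k) := by
  apply Nat.eq_of_testBit_eq
  intro j
  have h1 : l ^^^ k < 2 ^ n := Nat.xor_lt_two_pow hl hk
  rw [Nat.testBit_xor, Nat.testBit_two_pow_mul_add m hl, Nat.testBit_two_pow_mul_add m h1]
  by_cases hj : j < n
  · simp [hj]
  · have hkj : k.testBit j = false :=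
      Nat.testBit_lt_two_pow (lt_of_lt_of_le hk (Nat.pow_le_pow_right (by norm_num)
        (le_of_not_gt hj)))
    simp [hj, hkj]

/-- Structure of a move out of a position with `w 1 = 0` : exactly one of the
piles `0, 2, 3` decreases. -/
private lemma move_struct {w w' : Fin 4 → ℕ} (h : Move h1Inc w w') (hb : w 1 = 0) :
    w' 1 = 0 ∧
    ((w' 0 < w 0 ∧ w' 2 = w 2 ∧ w' 3 = w 3) ∨
     (w' 2 < w 2 ∧ w' 0 = w 0 ∧ w' 3 = w 3) ∨
     (w' 3 < w 3 ∧ w' 0 = w 0 ∧ w' 2 = w 2)) := by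
  obtain ⟨v, hle, hfix, hlt⟩ := h
  have hb' : w' 1 = 0 := Nat.le_zero.mp (hb ▸ hle 1)
  refine ⟨hb', ?_⟩
  rw [Fin.sum_univ_four, Fin.sum_univ_four] at hlt
  have hle0 := hle 0; have hle2 := hle 2; have hle3 := hle 3
  fin_cases v
  · have h2 : w' 2 = w 2 := hfix 2 (by decide)
    have h3 : w' 3 = w 3 := hfix 3 (by decide)
    exact Or.inl ⟨by omega, h2, h3⟩
  · have h2 : w' 2 = w 2 := hfix 2 (by decide)
    have h3 : w' 3 = w 3 := hfix 3 (by decide)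
    exact Or.inl ⟨by omega, h2, h3⟩
  · have h0 : w' 0 = w 0 := hfix 0 (by decide)
    have h3 : w' 3 = w 3 := hfix 3 (by decide)
    exact Or.inr (Or.inl ⟨by omega, h0, h3⟩)
  · have h0 : w' 0 = w 0 := hfix 0 (by decide)
    have h3 : w' 3 = w 3 := hfix 3 (by decide)
    exact Or.inr (Or.inl ⟨by omega, h0, h3⟩)
  · have h0 : w' 0 = w 0 := hfix 0 (by decide)
    have h2 : w' 2 = w 2 := hfix 2 (by decide)
    exact Or.inr (Or.inr ⟨by omega, h0, h2⟩)
  · have h0 : w' 0 = w 0 := hfix 0 (by decide)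
    have h2 : w' 2 = w 2 := hfix 2 (by decide)
    exact Or.inr (Or.inr ⟨by omega, h0, h2⟩)

private lemma xor3_1 (b c : ℕ) : (b ^^^ c) ^^^ b ^^^ c = 0 := by
  rw [Nat.xor_comm b c, Nat.xor_xor_cancel_right, Nat.xor_self]

private lemma xor3_2 (a c : ℕ) : a ^^^ (c ^^^ a) ^^^ c = 0 := by
  rw [Nat.xor_comm c a, Nat.xor_xor_cancel_left, Nat.xor_self]

private lemma xor3_2' (a c : ℕ) : a ^^^ (a ^^^ c) ^^^ c = 0 := by
  rw [Nat.xor_xor_cancel_left, Nat.xor_self]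

private lemma xor3_3 (a b : ℕ) : a ^^^ b ^^^ (a ^^^ b) = 0 := Nat.xor_self _

/-- A position with `w 1 = 0` and zero Nim-sum of the remaining three piles is
losing. -/
private lemma nim_losing : ∀ n (w : Fin 4 → ℕ), (∑ e, w e) ≤ n → w 1 = 0 →
    w 0 ^^^ w 2 ^^^ w 3 = 0 → Losing h1Inc w := by
  intro n
  induction n with
  | zero =>
    intro w hsum _ _
    rw [Losing]
    intro w' hmove _
    obtain ⟨v, _, _, hlt⟩ := hmove
    exact absurd (Nat.lt_of_lt_of_le hlt hsum) (Nat.not_lt_zero _)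
  | succ n ih =>
    intro w hsum hb hx
    rw [Losing]
    intro w' hmove HL
    rw [Losing] at HL
    obtain ⟨hb', hcase⟩ := move_struct hmove hb
    obtain ⟨_, _, _, hslt⟩ := hmove
    have hsum' : (∑ e, w' e) ≤ n := by omega
    have hxne : w' 0 ^^^ w' 2 ^^^ w' 3 ≠ 0 := by
      rw [Nat.xor_eq_zero_iff] at hx
      rcases hcase with ⟨h, h2, h3⟩ | ⟨h, h0, h3⟩ | ⟨h, h0, h2⟩
      · rw [h2, h3]
        intro hc
        rw [Nat.xor_eq_zero_iff] at hc
        have := Nat.xor_left_inj.mp (hc.trans hx.symm)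
        omega
      · rw [h0, h3]
        intro hc
        rw [Nat.xor_eq_zero_iff] at hc
        have := Nat.xor_right_inj.mp (hc.trans hx.symm)
        omega
      · rw [h0, h2]
        intro hc
        rw [Nat.xor_eq_zero_iff] at hc
        have := hc.symm.trans hx
        omega
    -- find a Nim move from w' back to a zero position
    obtain hA | hB | hC := Nat.xor_trichotomy hxne
    · -- decrease pile 0 to w' 2 ^^^ w' 3, playing at vertex 0
      set t := w' 2 ^^^ w' 3 with ht
      refine HL ![t, 0, w' 2, w' 3] ⟨0, ?_, ?_, ?_⟩ ?_
      · intro e; fin_cases e <;> simp_all <;> omega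
      · intro e he; fin_cases e
        · exact absurd (by decide) he
        · simpa using hb'.symm
        · rfl
        · rfl
      · rw [Fin.sum_univ_four, Fin.sum_univ_four]; simp; omega
      · exact ih ![t, 0, w' 2, w' 3]
          (by rw [Fin.sum_univ_four] at hsum' ⊢; simp; omega) rfl (xor3_1 _ _)
    · -- decrease pile 2 to w' 3 ^^^ w' 0, playing at vertex 3
      set t := w' 3 ^^^ w' 0 with ht
      refine HL ![w' 0, 0, t, w' 3] ⟨3, ?_, ?_, ?_⟩ ?_
      · intro e; fin_cases e <;> simp_all <;> omega
      · intro e he; fin_cases e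
        · rfl
        · simpa using hb'.symm
        · exact absurd (by decide) he
        · rfl
      · rw [Fin.sum_univ_four, Fin.sum_univ_four]; simp; omega
      · exact ih ![w' 0, 0, t, w' 3]
          (by rw [Fin.sum_univ_four] at hsum' ⊢; simp; omega) rfl (xor3_2 _ _)
    · -- decrease pile 3 to w' 0 ^^^ w' 2, playing at vertex 4
      set t := w' 0 ^^^ w' 2 with ht
      refine HL ![w' 0, 0, w' 2, t] ⟨4, ?_, ?_, ?_⟩ ?_
      · intro e; fin_cases e <;> simp_all <;> omega
      · intro e he; fin_cases e
        · rfl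
        · simpa using hb'.symm
        · rfl
        · exact absurd (by decide) he
      · rw [Fin.sum_univ_four, Fin.sum_univ_four]; simp; omega
      · exact ih ![w' 0, 0, w' 2, t]
          (by rw [Fin.sum_univ_four] at hsum' ⊢; simp; omega) rfl (xor3_3 _ _)

/-- On `H₁`: if `w(EF) = k ≥ 1` with `2^r ≤ k < 2^(r+1)`, `w(AB) = 2^(r+1)·m₁ + ℓ₁`,
`w(CD) = 2^(r+1)·m₂ + ℓ₂` with `ℓ₁, ℓ₂ < 2^(r+1)`, all of `w(AB), w(BC), w(CD)`
positive, and `m₁ ≠ m₂`, then the configuration is winning for the first player. -/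
theorem h1_winning_diff_blocks (w : Fin 4 → ℕ) (k r m₁ m₂ ℓ₁ ℓ₂ : ℕ)
    (hk : 1 ≤ k) (hr1 : 2 ^ r ≤ k) (hr2 : k < 2 ^ (r + 1))
    (hl1 : ℓ₁ < 2 ^ (r + 1)) (hl2 : ℓ₂ < 2 ^ (r + 1))
    (hEF : w 3 = k) (hAB : w 0 = 2 ^ (r + 1) * m₁ + ℓ₁)
    (hCD : w 2 = 2 ^ (r + 1) * m₂ + ℓ₂)
    (hABpos : 0 < w 0) (hBCpos : 0 < w 1) (hCDpos : 0 < w 2)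
    (hm : m₁ ≠ m₂) :
    Winning h1Inc w := by
  rcases hm.lt_or_gt with hlt' | hlt
  · -- m₁ < m₂ : move at vertex C : set CD := AB ⊕ EF, BC := 0
    have hbound : w 0 ^^^ w 3 < w 2 := by
      have h1 : w 0 ^^^ w 3 = 2 ^ (r + 1) * m₁ + (ℓ₁ ^^^ k) := by
        rw [hAB, hEF]; exact xor_block hl1 hr2
      have h2 : ℓ₁ ^^^ k < 2 ^ (r + 1) := Nat.xor_lt_two_pow hl1 hr2
      have h3 : 2 ^ (r + 1) * (m₁ + 1) ≤ 2 ^ (r + 1) * m₂ :=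
        Nat.mul_le_mul_left _ hlt'
      calc w 0 ^^^ w 3 = 2 ^ (r + 1) * m₁ + (ℓ₁ ^^^ k) := h1
        _ < 2 ^ (r + 1) * m₁ + 2 ^ (r + 1) := by omega
        _ = 2 ^ (r + 1) * (m₁ + 1) := by ring
        _ ≤ 2 ^ (r + 1) * m₂ := h3
        _ ≤ w 2 := by rw [hCD]; exact Nat.le_add_right _ _
    refine ⟨![w 0, 0, w 0 ^^^ w 3, w 3], ⟨2, ?_, ?_, ?_⟩, ?_⟩
    · intro e; fin_cases e <;> simp_all <;> omega
    · intro e he; fin_cases e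
      · rfl
      · exact absurd (by decide) he
      · exact absurd (by decide) he
      · rfl
    · rw [Fin.sum_univ_four, Fin.sum_univ_four]; simp; omega
    · exact nim_losing _ _ le_rfl rfl (xor3_2' _ _)
  · -- move at vertex B : set AB := CD ⊕ EF, BC := 0
    have hbound : w 2 ^^^ w 3 < w 0 := by
      have h1 : w 2 ^^^ w 3 = 2 ^ (r + 1) * m₂ + (ℓ₂ ^^^ k) := by
        rw [hCD, hEF]; exact xor_block hl2 hr2
      have h2 : ℓ₂ ^^^ k < 2 ^ (r + 1) := Nat.xor_lt_two_pow hl2 hr2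
      have h3 : 2 ^ (r + 1) * (m₂ + 1) ≤ 2 ^ (r + 1) * m₁ :=
        Nat.mul_le_mul_left _ hlt
      calc w 2 ^^^ w 3 = 2 ^ (r + 1) * m₂ + (ℓ₂ ^^^ k) := h1
        _ < 2 ^ (r + 1) * m₂ + 2 ^ (r + 1) := by omega
        _ = 2 ^ (r + 1) * (m₂ + 1) := by ring
        _ ≤ 2 ^ (r + 1) * m₁ := h3
        _ ≤ w 0 := by rw [hAB]; exact Nat.le_add_right _ _
    refine ⟨![w 2 ^^^ w 3, 0, w 2, w 3], ⟨1, ?_, ?_, ?_⟩, ?_⟩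
    · intro e; fin_cases e <;> simp_all <;> omega
    · intro e he; fin_cases e
      · exact absurd (by decide) he
      · exact absurd (by decide) he
      · rfl
      · rfl
    · rw [Fin.sum_univ_four, Fin.sum_univ_four]; simp; omega
    · exact nim_losing _ _ le_rfl rfl (xor3_1 _ _)
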